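/- Let s > 0 and let g : ℝ → ℝ be defined by g(x) = Σ_{j=3}^∞ j^{−2} 2^{−js} cos((11/8)·2^j·x); this series converges uniformly on ℝ and g is continuous and 2π-periodic. For n ≥ 3 set t_n = 8π/(11·2^n). Then the Fourier coefficient of the 2π-periodic function x ↦ g(x − t_n) − g(x) at the frequency 11·2^{n−3}, with normalization ĝ(k) = (1/(2π)) ∫₀^{2π} g(x) e^{−ikx} dx, equals −n^{−2}·2^{−ns}. -/

import Mathlib

open Real Filter Complex

lemma aux_exp_integral (m : ℤ) :
    (∫ x in (0:ℝ)..(2*π), Complex.exp ((m:ℂ) * Complex.I * (x:ℂ))) =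
      if m = 0 then ((2*π : ℝ) : ℂ) else 0 := by
  rcases eq_or_ne m 0 with h | h
  · simp [h]
  · rw [if_neg h]
    have hc : (m:ℂ) * Complex.I ≠ 0 := mul_ne_zero (Int.cast_ne_zero.2 h) Complex.I_ne_zero
    rw [integral_exp_mul_complex hc]
    have h1 : (m:ℂ) * Complex.I * ((2*π:ℝ):ℂ) = (m:ℤ) * (2*π*Complex.I) := by push_cast; ring
    rw [h1, Complex.exp_int_mul_two_pi_mul_I]
    simp

lemma aux_cos_integral (m K : ℕ) (hm : 0 < m) (hK : 0 < K) (φ : ℝ) :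
    (∫ x in (0:ℝ)..(2*π),
        ((Real.cos (m * x + φ) : ℝ) : ℂ) * Complex.exp (-Complex.I * (K:ℂ) * (x:ℂ)))
      = if m = K then (π:ℂ) * Complex.exp (Complex.I * (φ:ℂ)) else 0 := by
  have key : ∀ x : ℝ, ((Real.cos (m * x + φ) : ℝ) : ℂ) * Complex.exp (-Complex.I * (K:ℂ) * (x:ℂ))
      = Complex.exp (Complex.I * (φ:ℂ)) / 2
          * Complex.exp (((((m:ℤ) - (K:ℤ)) : ℤ):ℂ) * Complex.I * (x:ℂ))
        + Complex.exp (-(Complex.I * (φ:ℂ))) / 2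
          * Complex.exp ((((-(m:ℤ) - (K:ℤ)) : ℤ):ℂ) * Complex.I * (x:ℂ)) := by
    intro x
    rw [Complex.ofReal_cos, Complex.cos]
    have e1 : ((((m:ℝ) * x + φ : ℝ):ℂ) * Complex.I) + (-Complex.I * (K:ℂ) * (x:ℂ))
        = Complex.I * (φ:ℂ) + (((((m:ℤ) - (K:ℤ)) : ℤ):ℂ) * Complex.I * (x:ℂ)) := by
      push_cast; ring
    have e2 : ((-((((m:ℝ) * x + φ : ℝ)):ℂ)) * Complex.I) + (-Complex.I * (K:ℂ) * (x:ℂ))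
        = -(Complex.I * (φ:ℂ)) + ((((-(m:ℤ) - (K:ℤ)) : ℤ):ℂ) * Complex.I * (x:ℂ)) := by
      push_cast; ring
    push_cast
    rw [div_mul_eq_mul_div, add_mul, ← Complex.exp_add, ← Complex.exp_add]
    push_cast at e1 e2
    rw [e1, e2, Complex.exp_add, Complex.exp_add]
    ring
  rw [intervalIntegral.integral_congr (fun x _ => key x)]
  have hi1 : IntervalIntegrable
      (fun x : ℝ => Complex.exp (Complex.I * (φ:ℂ)) / 2
        * Complex.exp (((((m:ℤ) - (K:ℤ)) : ℤ):ℂ) * Complex.I * (x:ℂ)))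
      MeasureTheory.volume 0 (2*π) := by
    apply Continuous.intervalIntegrable; fun_prop
  have hi2 : IntervalIntegrable
      (fun x : ℝ => Complex.exp (-(Complex.I * (φ:ℂ))) / 2
        * Complex.exp ((((-(m:ℤ) - (K:ℤ)) : ℤ):ℂ) * Complex.I * (x:ℂ)))
      MeasureTheory.volume 0 (2*π) := by
    apply Continuous.intervalIntegrable; fun_prop
  rw [intervalIntegral.integral_add hi1 hi2, intervalIntegral.integral_const_mul,
    intervalIntegral.integral_const_mul, aux_exp_integral, aux_exp_integral]
  have h2 : (-(m:ℤ) - (K:ℤ)) ≠ 0 := by omega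
  rw [if_neg h2, mul_zero, add_zero]
  by_cases h : m = K
  · have : ((m:ℤ) - (K:ℤ)) = 0 := by omega
    rw [if_pos this, if_pos h]
    push_cast
    ring
  · have : ((m:ℤ) - (K:ℤ)) ≠ 0 := by omega
    rw [if_neg this, if_neg h, mul_zero]

/-- For `s > 0`, the series `g(x) = Σ_{j=3}^∞ j^{-2} 2^{-js} cos((11/8)·2^j·x)`
converges uniformly on `ℝ`, `g` is continuous and `2π`-periodic, and for `n ≥ 3` and
`t_n = 8π/(11·2^n)` the Fourier coefficient of `x ↦ g(x - t_n) - g(x)` at frequency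
`11·2^{n-3}` equals `-n^{-2}·2^{-ns}`. -/
theorem stmt_9 (s : ℝ) (hs : 0 < s) (g : ℝ → ℝ)
    (hg : ∀ x : ℝ, g x = ∑' j : ℕ,
      ((j : ℝ) + 3) ^ (-2 : ℝ) * (2 : ℝ) ^ (-(((j : ℝ) + 3)) * s)
        * Real.cos ((11 / 8) * 2 ^ (j + 3) * x)) :
    TendstoUniformly
      (fun N x => ∑ j ∈ Finset.range N,
        ((j : ℝ) + 3) ^ (-2 : ℝ) * (2 : ℝ) ^ (-(((j : ℝ) + 3)) * s)
          * Real.cos ((11 / 8) * 2 ^ (j + 3) * x))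
      g atTop ∧
    Continuous g ∧
    (∀ x : ℝ, g (x + 2 * π) = g x) ∧
    (∀ n : ℕ, 3 ≤ n → ∀ t : ℝ, t = 8 * π / (11 * 2 ^ n) →
      (1 / (2 * (π : ℂ))) * ∫ x in (0:ℝ)..(2 * π),
          ((g (x - t) - g x : ℝ) : ℂ)
            * Complex.exp (-Complex.I * ((11 * 2 ^ (n - 3) : ℕ) : ℂ) * (x : ℂ))
        = -(((n : ℝ) ^ (-2 : ℝ) * (2 : ℝ) ^ (-(n : ℝ) * s) : ℝ) : ℂ)) := by
  set A : ℕ → ℝ := fun j => ((j : ℝ) + 3) ^ (-2 : ℝ) * (2 : ℝ) ^ (-(((j : ℝ) + 3)) * s)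
    with hA_def
  have hA_nonneg : ∀ j, 0 ≤ A j := fun j =>
    mul_nonneg (Real.rpow_nonneg (by positivity) _) (Real.rpow_nonneg (by norm_num) _)
  have hr0 : (0:ℝ) ≤ (2:ℝ) ^ (-s) := Real.rpow_nonneg (by norm_num) _
  have hr1 : (2:ℝ) ^ (-s) < 1 :=
    Real.rpow_lt_one_of_one_lt_of_neg one_lt_two (by linarith)
  have hA_le : ∀ j, A j ≤ ((2:ℝ) ^ (-s)) ^ (j + 3) := by
    intro j
    have h1 : ((j:ℝ) + 3) ^ (-2 : ℝ) ≤ 1 :=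
      Real.rpow_le_one_of_one_le_of_nonpos
        (by have := Nat.cast_nonneg (α := ℝ) j; linarith) (by norm_num)
    have h2 : (2:ℝ) ^ (-(((j:ℝ) + 3)) * s) = ((2:ℝ) ^ (-s)) ^ (j + 3) := by
      rw [← Real.rpow_natCast ((2:ℝ) ^ (-s)) (j + 3),
        ← Real.rpow_mul (by norm_num : (0:ℝ) ≤ 2)]
      congr 1
      push_cast
      ring
    rw [hA_def]
    simp only
    rw [h2]
    exact mul_le_of_le_one_left (pow_nonneg hr0 _) h1
  have hA_sum : Summable A := by
    refine Summable.of_nonneg_of_le hA_nonneg hA_le ?_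
    refine ((summable_geometric_of_lt_one hr0 hr1).mul_left (((2:ℝ) ^ (-s)) ^ 3)).congr
      fun j => ?_
    rw [pow_add]
    ring
  have hterm_bound : ∀ (j : ℕ) (x : ℝ),
      ‖A j * Real.cos ((11 / 8) * 2 ^ (j + 3) * x)‖ ≤ A j := by
    intro j x
    have h1 : ‖A j * Real.cos ((11 / 8) * 2 ^ (j + 3) * x)‖
        = |A j| * |Real.cos ((11 / 8) * 2 ^ (j + 3) * x)| := abs_mul _ _
    rw [h1, _root_.abs_of_nonneg (hA_nonneg j)]
    calc A j * |Real.cos ((11 / 8) * 2 ^ (j + 3) * x)| ≤ A j * 1 :=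
          mul_le_mul_of_nonneg_left (Real.abs_cos_le_one _) (hA_nonneg j)
      _ = A j := mul_one _
  have hgsum : ∀ y : ℝ, HasSum (fun j => A j * Real.cos ((11 / 8) * 2 ^ (j + 3) * y)) (g y) := by
    intro y
    have hsummable : Summable (fun j => A j * Real.cos ((11 / 8) * 2 ^ (j + 3) * y)) :=
      Summable.of_norm_bounded hA_sum (fun j => hterm_bound j y)
    rw [hg y]
    exact hsummable.hasSum
  have hgeq : g = fun y => ∑' j : ℕ, A j * Real.cos ((11 / 8) * 2 ^ (j + 3) * y) := funext hg
  have part1 : TendstoUniformly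
      (fun N x => ∑ j ∈ Finset.range N, A j * Real.cos ((11 / 8) * 2 ^ (j + 3) * x))
      g atTop := by
    rw [hgeq]
    exact tendstoUniformly_tsum_nat hA_sum hterm_bound
  refine ⟨part1, ?_, ?_, ?_⟩
  · exact part1.continuous (Eventually.of_forall fun N =>
      continuous_finset_sum _ fun j _ => by fun_prop).frequently
  · intro x
    rw [hg, hg]
    refine tsum_congr fun j => ?_
    congr 1
    have h3 : (11 / 8 : ℝ) * 2 ^ (j + 3) * (x + 2 * π)
        = (11 / 8) * 2 ^ (j + 3) * x + ((11 * 2 ^ j : ℤ) : ℝ) * (2 * π) := by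
      push_cast
      ring
    rw [h3, Real.cos_add_int_mul_two_pi]
  · intro n hn t ht
    set K : ℕ := 11 * 2 ^ (n - 3) with hK_def
    have hKpos : 0 < K := by positivity
    have h8 : (2:ℝ) ^ n = 2 ^ (n - 3) * 8 := by
      have hnn : n - 3 + 3 = n := by omega
      calc (2:ℝ) ^ n = 2 ^ (n - 3 + 3) := by rw [hnn]
        _ = 2 ^ (n - 3) * 8 := by rw [pow_add]; norm_num
    have hKR : (K:ℝ) = 11 * 2 ^ (n - 3) := by rw [hK_def]; push_cast; ring
    have hKt : (K:ℝ) * t = π := by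
      rw [hKR, ht, h8]
      have h0 : (11:ℝ) * (2 ^ (n - 3) * 8) ≠ 0 := by positivity
      field_simp
    -- the complex integrand terms
    set F : ℕ → ℝ → ℂ := fun j x =>
      ((A j * Real.cos ((11 / 8) * 2 ^ (j + 3) * (x - t))
          - A j * Real.cos ((11 / 8) * 2 ^ (j + 3) * x) : ℝ) : ℂ)
        * Complex.exp (-Complex.I * (K:ℂ) * (x:ℂ)) with hF_def
    have hFcont : ∀ j, Continuous (F j) := by
      intro j
      rw [hF_def]
      fun_prop
    have hFsum : ∀ x : ℝ, HasSum (fun j => F j x)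
        (((g (x - t) - g x : ℝ) : ℂ) * Complex.exp (-Complex.I * (K:ℂ) * (x:ℂ))) := by
      intro x
      have h1 := (hgsum (x - t)).sub (hgsum x)
      have h2 := (Complex.hasSum_ofReal.2 h1).mul_right
        (Complex.exp (-Complex.I * (K:ℂ) * (x:ℂ)))
      refine h2.congr_fun fun j => ?_
      rw [hF_def]
    have hnorm_exp : ∀ x : ℝ, ‖Complex.exp (-Complex.I * (K:ℂ) * (x:ℂ))‖ = 1 := by
      intro x
      have : -Complex.I * (K:ℂ) * (x:ℂ) = ((-(K * x) : ℝ) : ℂ) * Complex.I := by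
        push_cast; ring
      rw [this, Complex.norm_exp_ofReal_mul_I]
    have hFbound : ∀ (j : ℕ) (x : ℝ), ‖F j x‖ ≤ 2 * A j := by
      intro j x
      rw [hF_def]
      simp only
      rw [norm_mul, hnorm_exp, mul_one, Complex.norm_real, Real.norm_eq_abs]
      have e1 := hterm_bound j (x - t)
      have e2 := hterm_bound j x
      rw [Real.norm_eq_abs] at e1 e2
      calc |A j * Real.cos ((11 / 8) * 2 ^ (j + 3) * (x - t))
            - A j * Real.cos ((11 / 8) * 2 ^ (j + 3) * x)|
          ≤ |A j * Real.cos ((11 / 8) * 2 ^ (j + 3) * (x - t))|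
            + |A j * Real.cos ((11 / 8) * 2 ^ (j + 3) * x)| := abs_sub _ _
        _ ≤ 2 * A j := by linarith
    have hmj : ∀ j : ℕ, ((11 * 2 ^ j : ℕ) : ℝ) = (11 / 8) * 2 ^ (j + 3) := by
      intro j
      push_cast
      ring
    have hFint : ∀ j : ℕ, (∫ x in (0:ℝ)..(2*π), F j x)
        = if j = n - 3 then ((-2 * π * A (n - 3) : ℝ) : ℂ) else 0 := by
      intro j
      have hmpos : 0 < 11 * 2 ^ j := by positivity
      have harg1 : ∀ x : ℝ, (11 / 8 : ℝ) * 2 ^ (j + 3) * (x - t)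
          = ((11 * 2 ^ j : ℕ) : ℝ) * x + (-((11 / 8) * 2 ^ (j + 3) * t)) := by
        intro x; rw [hmj]; ring
      have harg2 : ∀ x : ℝ, (11 / 8 : ℝ) * 2 ^ (j + 3) * x
          = ((11 * 2 ^ j : ℕ) : ℝ) * x + (0 : ℝ) := by
        intro x; rw [hmj]; ring
      have hsplit : ∀ x : ℝ, F j x
          = (A j : ℂ) * (((Real.cos (((11 * 2 ^ j : ℕ) : ℝ) * x
                + (-((11 / 8) * 2 ^ (j + 3) * t))) : ℝ) : ℂ)
              * Complex.exp (-Complex.I * (K:ℂ) * (x:ℂ)))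
            - (A j : ℂ) * (((Real.cos (((11 * 2 ^ j : ℕ) : ℝ) * x + (0:ℝ)) : ℝ) : ℂ)
              * Complex.exp (-Complex.I * (K:ℂ) * (x:ℂ))) := by
        intro x
        rw [hF_def]
        simp only
        rw [← harg1, ← harg2]
        push_cast
        ring
      have hi1 : IntervalIntegrable (fun x : ℝ =>
          (((Real.cos (((11 * 2 ^ j : ℕ) : ℝ) * x + (-((11 / 8) * 2 ^ (j + 3) * t))) : ℝ) : ℂ)
            * Complex.exp (-Complex.I * (K:ℂ) * (x:ℂ)))) MeasureTheory.volume 0 (2*π) := by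
        apply Continuous.intervalIntegrable; fun_prop
      have hi2 : IntervalIntegrable (fun x : ℝ =>
          (((Real.cos (((11 * 2 ^ j : ℕ) : ℝ) * x + (0:ℝ)) : ℝ) : ℂ)
            * Complex.exp (-Complex.I * (K:ℂ) * (x:ℂ)))) MeasureTheory.volume 0 (2*π) := by
        apply Continuous.intervalIntegrable; fun_prop
      rw [intervalIntegral.integral_congr (fun x _ => hsplit x),
        intervalIntegral.integral_sub (hi1.const_mul _) (hi2.const_mul _),
        intervalIntegral.integral_const_mul, intervalIntegral.integral_const_mul,
        aux_cos_integral _ _ hmpos hKpos, aux_cos_integral _ _ hmpos hKpos]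
      have hiff : (11 * 2 ^ j = K) ↔ j = n - 3 := by
        rw [hK_def]
        constructor
        · intro h
          have := Nat.pow_right_injective (le_refl 2) (by omega : 2 ^ j = 2 ^ (n - 3))
          omega
        · intro h; rw [h]
      by_cases hj : j = n - 3
      · rw [if_pos ((hiff).2 hj), if_pos ((hiff).2 hj), if_pos hj]
        have hphase : (11 / 8 : ℝ) * 2 ^ (j + 3) * t = π := by
          rw [← hmj, hj]
          rw [← hK_def] at *
          calc ((11 * 2 ^ (n - 3) : ℕ) : ℝ) * t = (K:ℝ) * t := by rw [hK_def]
            _ = π := hKt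
        rw [hphase, hj]
        have hexp1 : Complex.exp (Complex.I * ((-π : ℝ) : ℂ)) = -1 := by
          rw [Complex.ofReal_neg]
          rw [show Complex.I * (-(π:ℂ)) = -((π:ℂ) * Complex.I) by ring]
          rw [Complex.exp_neg, Complex.exp_pi_mul_I]
          norm_num
        rw [hexp1]
        rw [Complex.ofReal_zero, mul_zero, Complex.exp_zero]
        push_cast
        ring
      · rw [if_neg (fun h => hj (hiff.1 h)), if_neg (fun h => hj (hiff.1 h)), if_neg hj]
        simp
    have hDCT : HasSum (fun j => ∫ x in (0:ℝ)..(2*π), F j x)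
        (∫ x in (0:ℝ)..(2*π),
          ((g (x - t) - g x : ℝ) : ℂ) * Complex.exp (-Complex.I * (K:ℂ) * (x:ℂ))) := by
      apply intervalIntegral.hasSum_integral_of_dominated_convergence
        (bound := fun j _ => 2 * A j)
      · exact fun j => (hFcont j).aestronglyMeasurable
      · exact fun j => MeasureTheory.ae_of_all _ fun x _ => hFbound j x
      · exact MeasureTheory.ae_of_all _ fun x _ => (hA_sum.mul_left 2)
      · exact intervalIntegrable_const
      · exact MeasureTheory.ae_of_all _ fun x _ => hFsum x
    have hsingle : HasSum (fun j => ∫ x in (0:ℝ)..(2*π), F j x)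
        ((-2 * π * A (n - 3) : ℝ) : ℂ) := by
      have := hasSum_ite_eq (n - 3) ((-2 * π * A (n - 3) : ℝ) : ℂ)
      refine this.congr_fun fun j => ?_
      rw [hFint j]
    have hint_eq : (∫ x in (0:ℝ)..(2*π),
        ((g (x - t) - g x : ℝ) : ℂ) * Complex.exp (-Complex.I * (K:ℂ) * (x:ℂ)))
        = ((-2 * π * A (n - 3) : ℝ) : ℂ) := hDCT.unique hsingle
    have hKC : ((11 * 2 ^ (n - 3) : ℕ) : ℂ) = (K : ℂ) := by rw [hK_def]
    rw [show (fun x : ℝ => ((g (x - t) - g x : ℝ) : ℂ)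
        * Complex.exp (-Complex.I * ((11 * 2 ^ (n - 3) : ℕ) : ℂ) * (x:ℂ)))
      = fun x : ℝ => ((g (x - t) - g x : ℝ) : ℂ)
        * Complex.exp (-Complex.I * (K:ℂ) * (x:ℂ)) from funext fun x => by rw [hKC]]
    have hAn : A (n - 3) = (n:ℝ) ^ (-2:ℝ) * (2:ℝ) ^ (-(n:ℝ) * s) := by
      rw [hA_def]
      simp only
      have hc3 : ((n - 3 : ℕ) : ℝ) + 3 = (n : ℝ) := by
        rw [Nat.cast_sub hn]
        push_cast
        ring
      rw [hc3]
    rw [hint_eq, hAn]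
    have hπ : (π:ℂ) ≠ 0 := Complex.ofReal_ne_zero.2 Real.pi_ne_zero
    push_cast
    field_simp
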